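/- For even k, the minimum number of control nodes of the complete k-uniform hypergraph on n > k nodes is exactly n−1. -/

import Mathlib

noncomputable section
open Classical

/-- Prepend `j` to the index tuple `js`. -/
def consIdx {n k : ℕ} (j : Fin n) (js : Fin (k - 1) → Fin n) : Fin k → Fin n :=
  fun t => if h : (t : ℕ) = 0 then j
    else js ⟨(t : ℕ) - 1, by have := t.isLt; omega⟩

/-- Adjacency tensor of a `k`-uniform hypergraph with hyperedge set `E`. -/
def adjT (n k : ℕ) (E : Finset (Finset (Fin n))) : (Fin k → Fin n) → ℝ :=
  fun j => if Function.Injective j ∧ Finset.image j Finset.univ ∈ E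
    then ((Nat.factorial (k - 1) : ℝ))⁻¹ else 0

/-- Contraction of a `k`-th order tensor along `k−1` modes with vectors `v`. -/
def tcontract {n k : ℕ} (A : (Fin k → Fin n) → ℝ) (v : Fin (k - 1) → (Fin n → ℝ)) :
    Fin n → ℝ :=
  fun j => ∑ js : Fin (k - 1) → Fin n, A (consIdx j js) * ∏ i, v i (js i)

/-- The controllability subspace `𝒞(A,B)`: the smallest subspace of `ℝⁿ` containing the
set `Bc` of input columns and closed under the contraction map `v₁,…,v_{k−1} ↦ A v₁ ⋯ v_{k−1}`. -/
def ctrlSpace {n k : ℕ} (A : (Fin k → Fin n) → ℝ) (Bc : Set (Fin n → ℝ)) :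
    Submodule ℝ (Fin n → ℝ) :=
  sInf {W : Submodule ℝ (Fin n → ℝ) | Bc ⊆ ↑W ∧
    ∀ v : Fin (k - 1) → (Fin n → ℝ), (∀ i, v i ∈ W) → tcontract A v ∈ W}

/-- The hyperedge `{l, l+1, …, l+k−1}` of a `k`-uniform hyperchain. -/
def chainEdge (n k l : ℕ) : Finset (Fin n) :=
  Finset.univ.filter (fun i => l ≤ (i : ℕ) ∧ (i : ℕ) < l + k)

/-- The hyperedge set of the `k`-uniform hyperchain on `n` nodes. -/
def chainE (n k : ℕ) : Finset (Finset (Fin n)) :=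
  (Finset.range (n - k + 1)).image (chainEdge n k)

/-- Adjacency tensor of the complete `k`-uniform hypergraph on `n` nodes. -/
def completeT (n k : ℕ) : (Fin k → Fin n) → ℝ :=
  fun j => if Function.Injective j then ((Nat.factorial (k - 1) : ℝ))⁻¹ else 0

lemma consIdx_zero {n k : ℕ} (hk : 0 < k) (j : Fin n) (js : Fin (k-1) → Fin n) :
    consIdx j js ⟨0, hk⟩ = j := by simp [consIdx]

lemma consIdx_succ {n k : ℕ} (j : Fin n) (js : Fin (k-1) → Fin n) (i : ℕ) (h : i + 1 < k) :
    consIdx j js ⟨i+1, h⟩ = js ⟨i, by omega⟩ := by simp [consIdx]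

lemma consIdx_inj_iff {n k : ℕ} (hk : 0 < k) (j : Fin n) (js : Fin (k-1) → Fin n) :
    Function.Injective (consIdx j js) ↔ Function.Injective js ∧ ∀ i, js i ≠ j := by
  constructor
  · intro h
    constructor
    · intro i₁ i₂ he
      have h1 : (⟨(i₁:ℕ)+1, by omega⟩ : Fin k) = ⟨(i₂:ℕ)+1, by omega⟩ := by
        apply h
        rw [consIdx_succ j js i₁ (by omega), consIdx_succ j js i₂ (by omega)]
        simpa using he
      have := congrArg Fin.val h1
      simp at this
      exact Fin.ext this
    · intro i he
      have h1 : (⟨(i:ℕ)+1, by omega⟩ : Fin k) = ⟨0, hk⟩ := by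
        apply h
        rw [consIdx_succ j js i (by omega), consIdx_zero hk]
        simpa using he
      have := congrArg Fin.val h1
      simp at this
  · rintro ⟨hinj, hne⟩ t₁ t₂ he
    simp only [consIdx] at he
    rcases Nat.eq_zero_or_pos (t₁ : ℕ) with h1 | h1 <;>
      rcases Nat.eq_zero_or_pos (t₂ : ℕ) with h2 | h2
    · exact Fin.ext (h1.trans h2.symm)
    · rw [dif_pos h1] at he; rw [dif_neg (by omega : ¬(t₂:ℕ)=0)] at he
      exact absurd he.symm (hne _)
    · rw [dif_neg (by omega : ¬(t₁:ℕ)=0)] at he; rw [dif_pos h2] at he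
      exact absurd he (hne _)
    · rw [dif_neg (by omega : ¬(t₁:ℕ)=0)] at he
      rw [dif_neg (by omega : ¬(t₂:ℕ)=0)] at he
      have := congrArg Fin.val (hinj he)
      simp only [Fin.val_mk] at this
      exact Fin.ext (by omega)

lemma consIdx_comp {n k : ℕ} (σ : Equiv.Perm (Fin n)) (j : Fin n) (js : Fin (k-1) → Fin n) :
    consIdx (σ j) (fun i => σ (js i)) = σ ∘ consIdx j js := by
  funext t
  simp only [consIdx, Function.comp]
  split <;> rfl

lemma completeT_comp {n k : ℕ} (σ : Equiv.Perm (Fin n)) (f : Fin k → Fin n) :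
    completeT n k (σ ∘ f) = completeT n k f := by
  unfold completeT
  rw [if_congr (Function.Injective.of_comp_iff σ.injective f) rfl rfl]

lemma tcontract_swap {n k : ℕ} (a b : Fin n)
    (v : Fin (k-1) → (Fin n → ℝ)) (hv : ∀ i, v i a = v i b) :
    tcontract (completeT n k) v a = tcontract (completeT n k) v b := by
  unfold tcontract
  set σ := Equiv.swap a b with hσ
  apply Fintype.sum_equiv (Equiv.arrowCongr (Equiv.refl (Fin (k-1))) σ)
  intro js
  have h1 : consIdx b (fun i => σ (js i)) = σ ∘ consIdx a js := by
    have := consIdx_comp σ a js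
    rwa [hσ, Equiv.swap_apply_left, ← hσ] at this
  have h2 : ∀ i, v i (σ (js i)) = v i (js i) := by
    intro i
    rcases eq_or_ne (js i) a with h | h
    · rw [h, hσ, Equiv.swap_apply_left]; exact (hv i).symm
    rcases eq_or_ne (js i) b with h' | h'
    · rw [h', hσ, Equiv.swap_apply_right]; exact hv i
    · rw [hσ, Equiv.swap_apply_of_ne_of_ne h h']
  have harr : ((Equiv.refl (Fin (k-1))).arrowCongr σ) js = fun i => σ (js i) := by
    funext i; simp
  rw [harr, h1, completeT_comp]
  congr 1
  exact (Finset.prod_congr rfl fun i _ => h2 i).symm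

lemma tcontract_single {n k : ℕ} (s : Fin (k-1) → Fin n) :
    tcontract (completeT n k) (fun i => (Pi.single (s i) 1 : Fin n → ℝ))
      = fun j => completeT n k (consIdx j s) := by
  funext j
  unfold tcontract
  rw [Finset.sum_eq_single s]
  · simp [Pi.single_apply]
  · intro js _ hne
    have : ∃ i, js i ≠ s i := by
      by_contra h
      push_neg at h
      exact hne (funext h)
    obtain ⟨i, hi⟩ := this
    have hz : (∏ i, (Pi.single (s i) 1 : Fin n → ℝ) (js i)) = 0 :=
      Finset.prod_eq_zero (Finset.mem_univ i) (by simp [Pi.single_apply, hi])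
    rw [hz, mul_zero]
  · intro h; exact absurd (Finset.mem_univ s) h

/-- For even `k`, the minimum number of control nodes of the complete `k`-uniform
hypergraph on `n > k` nodes is exactly `n−1`. -/
theorem stmt13 {n k : ℕ} (hkeven : Even k) (hk : 2 ≤ k) (hkn : k < n) :
    (∃ S : Finset (Fin n), S.card = n - 1 ∧
        ctrlSpace (completeT n k) {x | ∃ s ∈ S, x = (Pi.single s 1 : Fin n → ℝ)} = ⊤)
      ∧ ∀ S : Finset (Fin n),
        ctrlSpace (completeT n k) {x | ∃ s ∈ S, x = (Pi.single s 1 : Fin n → ℝ)} = ⊤ →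
          n - 1 ≤ S.card := by
  have hc : ((Nat.factorial (k - 1) : ℝ))⁻¹ ≠ 0 := by
    simp [Nat.factorial_ne_zero]
  set c : ℝ := ((Nat.factorial (k - 1) : ℝ))⁻¹ with hcdef
  constructor
  · -- sufficiency with S = all but the last node
    have hn1 : n - 1 < n := by omega
    set last : Fin n := ⟨n - 1, hn1⟩ with hlast
    refine ⟨Finset.univ.erase last, ?_, ?_⟩
    · rw [Finset.card_erase_of_mem (Finset.mem_univ _), Finset.card_univ, Fintype.card_fin]
    · apply top_unique
      apply le_sInf
      rintro W ⟨hB, hC⟩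
      -- basis vectors for controlled nodes
      have hsing : ∀ j : Fin n, j ≠ last → (Pi.single j 1 : Fin n → ℝ) ∈ W := by
        intro j hj
        exact hB ⟨j, Finset.mem_erase.mpr ⟨hj, Finset.mem_univ j⟩, rfl⟩
      -- the contraction input
      set s : Fin (k-1) → Fin n := fun i => ⟨(i : ℕ), by have := i.isLt; omega⟩ with hs
      have hsinj : Function.Injective s := by
        intro i₁ i₂ h
        have hvv := congrArg Fin.val h
        exact Fin.ext hvv
      have hsv : ∀ i : Fin (k-1), ((s i : Fin n) : ℕ) = (i : ℕ) := fun i => rfl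
      have hvmem : ∀ i : Fin (k-1), (Pi.single (s i) 1 : Fin n → ℝ) ∈ W := by
        intro i
        apply hsing
        intro h
        have := congrArg Fin.val h
        simp only [hsv] at this
        have := i.isLt
        have h3 : ((last : Fin n) : ℕ) = n - 1 := rfl; omega
      have hw : tcontract (completeT n k) (fun i => (Pi.single (s i) 1 : Fin n → ℝ)) ∈ W :=
        hC _ hvmem
      rw [tcontract_single] at hw
      -- value of w
      have hwval : ∀ j : Fin n, completeT n k (consIdx j s)
          = if k - 1 ≤ (j : ℕ) then c else 0 := by
        intro j
        unfold completeT
        rw [if_congr (consIdx_inj_iff (by omega : 0 < k) j s) rfl rfl]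
        by_cases hj : k - 1 ≤ (j : ℕ)
        · rw [if_pos hj, if_pos]
          refine ⟨hsinj, fun i => ?_⟩
          intro h
          have := congrArg Fin.val h
          simp only [hsv] at this
          have := i.isLt
          omega
        · rw [if_neg hj, if_neg]
          rintro ⟨-, h2⟩
          exact h2 ⟨(j : ℕ), by omega⟩ (Fin.ext rfl)
      -- the missing basis vector
      set F : Finset (Fin n) :=
        Finset.univ.filter (fun j => k - 1 ≤ (j : ℕ) ∧ (j : ℕ) ≠ n - 1) with hF
      have hkey : (Pi.single last 1 : Fin n → ℝ)
          = c⁻¹ • (fun j => completeT n k (consIdx j s)) - ∑ j ∈ F, Pi.single j 1 := by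
        funext j'
        have hsum : (∑ j ∈ F, (Pi.single j 1 : Fin n → ℝ)) j'
            = if j' ∈ F then (1 : ℝ) else 0 := by
          rw [Finset.sum_apply]
          simp only [Pi.single_apply]
          exact Finset.sum_ite_eq F j' (fun _ => (1 : ℝ))
        simp only [Pi.sub_apply, hsum]
        simp only [Pi.sub_apply, Pi.smul_apply, smul_eq_mul, hsum, hwval j',
          Pi.single_apply, hF, Finset.mem_filter, Finset.mem_univ, true_and]
        have hlj : (j' = last) ↔ ((j' : ℕ) = n - 1) := by
          constructor
          · intro h; rw [h]
          · intro h; exact Fin.ext h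
        by_cases h1 : (j' : ℕ) = n - 1
        · have hk1 : k - 1 ≤ (j' : ℕ) := by omega
          rw [if_pos (hlj.mpr h1), if_pos hk1, if_neg (by simp [h1]), inv_mul_cancel₀ hc]
          ring
        · rw [if_neg (fun h => h1 (hlj.mp h))]
          by_cases h2 : k - 1 ≤ (j' : ℕ)
          · rw [if_pos h2, if_pos ⟨h2, h1⟩, inv_mul_cancel₀ hc]
            ring
          · rw [if_neg h2, if_neg (by tauto)]
            ring
      have hlastmem : (Pi.single last 1 : Fin n → ℝ) ∈ W := by
        rw [hkey]
        refine W.sub_mem (W.smul_mem _ hw) (Submodule.sum_mem _ ?_)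
        intro j hj
        apply hsing
        intro h
        rw [hF, Finset.mem_filter] at hj
        exact hj.2.2 (congrArg Fin.val h)
      -- all basis vectors, hence everything
      have hall : ∀ j : Fin n, (Pi.single j 1 : Fin n → ℝ) ∈ W := by
        intro j
        by_cases h : j = last
        · rw [h]; exact hlastmem
        · exact hsing j h
      intro x _
      have hx : x = ∑ j : Fin n, x j • (Pi.single j 1 : Fin n → ℝ) := by
        funext i
        rw [Finset.sum_apply]
        simp [Pi.single_apply]
      rw [hx]
      exact Submodule.sum_mem _ fun j _ => W.smul_mem _ (hall j)
  · -- necessity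
    intro S hS
    by_contra hlt
    push_neg at hlt
    have hcompl : 1 < Sᶜ.card := by
      have := Finset.card_compl S (α := Fin n)
      rw [Finset.card_compl, Fintype.card_fin]
      omega
    obtain ⟨a, ha, b, hb, hab⟩ := Finset.one_lt_card.mp hcompl
    have ha' : a ∉ S := Finset.mem_compl.mp ha
    have hb' : b ∉ S := Finset.mem_compl.mp hb
    set W : Submodule ℝ (Fin n → ℝ) :=
      LinearMap.ker ((LinearMap.proj a : ((Fin n) → ℝ) →ₗ[ℝ] ℝ) - LinearMap.proj b) with hW
    have hmem : ∀ x : Fin n → ℝ, x ∈ W ↔ x a = x b := by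
      intro x
      rw [hW, LinearMap.mem_ker, LinearMap.sub_apply, LinearMap.proj_apply,
        LinearMap.proj_apply, sub_eq_zero]
    have hWin : W ∈ {W : Submodule ℝ (Fin n → ℝ) |
        {x | ∃ s ∈ S, x = (Pi.single s 1 : Fin n → ℝ)} ⊆ ↑W ∧
        ∀ v : Fin (k - 1) → (Fin n → ℝ), (∀ i, v i ∈ W) → tcontract (completeT n k) v ∈ W} := by
      constructor
      · rintro x ⟨s, hsS, rfl⟩
        rw [SetLike.mem_coe, hmem]
        have hsa : a ≠ s := fun h => ha' (h ▸ hsS)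
        have hsb : b ≠ s := fun h => hb' (h ▸ hsS)
        simp [Pi.single_apply, hsa, hsb]
      · intro v hv
        rw [hmem]
        exact tcontract_swap a b v fun i => (hmem (v i)).mp (hv i)
    have hle : ctrlSpace (completeT n k) {x | ∃ s ∈ S, x = (Pi.single s 1 : Fin n → ℝ)} ≤ W :=
      sInf_le hWin
    rw [hS, top_le_iff] at hle
    have : (Pi.single a 1 : Fin n → ℝ) ∈ W := hle ▸ Submodule.mem_top
    rw [hmem] at this
    simp [Pi.single_apply, hab.symm] at this
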